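/- For every language of correct protocols PROT and every finite input alphabet Σ, a language L ⊆ Σ* is accepted by some one-way nondeterministic PROT-automaton (1NB_PROT-automaton) with input alphabet Σ if and only if there exists a finite-state transducer T from the protocol alphabet Γ_wr ∪ Γ_qu ∪ Γ_re to Σ such that L = T(PROT). In other words, the class of 1NB_PROT-recognizable languages is exactly the principal rational cone generated by PROT. -/

import Mathlib

/-! ### Finite-state transducers -/

/-- A finite-state transducer from alphabet `α` to alphabet `β`, with state type `Q`:
an initial state, a set of accepting states, and a finite set of transitions
`(q, x, y, q')` reading `x ∈ α ∪ {ε}` and writing the word `y ∈ β*`. -/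
structure FST (α β Q : Type) where
  init : Q
  accept : Set Q
  trans : Set (Q × Option α × List β × Q)
  trans_fin : trans.Finite

/-- Paths of a transducer: `T.Path q u v q'` holds iff some sequence of transitions
leads from `q` to `q'` with input labels concatenating to `u` and output labels
concatenating to `v`. -/
inductive FST.Path {α β Q : Type} (T : FST α β Q) : Q → List α → List β → Q → Prop
  | refl (q : Q) : FST.Path T q [] [] q
  | step {q q' q'' : Q} {x : Option α} {y : List β} {u : List α} {v : List β} :
      (q, x, y, q') ∈ T.trans → FST.Path T q' u v q'' →
      FST.Path T q (x.toList ++ u) (y ++ v) q''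

/-- The relation computed by a transducer. -/
def FST.Rel {α β Q : Type} (T : FST α β Q) (u : List α) (v : List β) : Prop :=
  ∃ f ∈ T.accept, T.Path T.init u v f

/-- The image `T(B)` of a language under the relation computed by a transducer. -/
def FST.Img {α β Q : Type} (T : FST α β Q) (B : Set (List α)) : Set (List β) :=
  {v | ∃ u ∈ B, T.Rel u v}

/-- A transducer is deterministic if, for each state `q`, the transitions leaving `q`
either consist of a single transition with input label `ε`, or all have pairwise
distinct input labels, none of which is `ε`. -/
def FST.Det {α β Q : Type} (T : FST α β Q) : Prop :=
  ∀ q : Q,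
    (∃ t ∈ T.trans, t.1 = q ∧ t.2.1 = (none : Option α) ∧
        ∀ t' ∈ T.trans, t'.1 = q → t' = t) ∨
    ((∀ t ∈ T.trans, t.1 = q → t.2.1 ≠ none) ∧
      ∀ t ∈ T.trans, ∀ t' ∈ T.trans, t.1 = q → t'.1 = q → t.2.1 = t'.2.1 → t = t')

/-- Rational dominance: `RatDom A B` iff `A = T(B)` for some finite-state transducer. -/
def RatDom {α β : Type} (A : Set (List α)) (B : Set (List β)) : Prop :=
  ∃ (n : ℕ) (T : FST β α (Fin n)), T.Img B = A

/-! ### Protocols -/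

/-- The protocol alphabet `Γ_wr ∪ Γ_qu ∪ Γ_re` (disjoint union). -/
abbrev PLet (W Q R : Type) := W ⊕ Q ⊕ R

def wrLet {W Q R : Type} (w : W) : PLet W Q R := Sum.inl w
def quLet {W Q R : Type} (q : Q) : PLet W Q R := Sum.inr (Sum.inl q)
def reLet {W Q R : Type} (r : R) : PLet W Q R := Sum.inr (Sum.inr r)

/-- The query block `u q r`. -/
def pblock {W Q R : Type} (u : List W) (q : Q) (r : R) : List (PLet W Q R) :=
  u.map wrLet ++ [quLet q, reLet r]

/-- A word over the protocol alphabet is a protocol (w.r.t. the validity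
relation `valid`) iff it is a concatenation of query blocks `uᵢqᵢrᵢ` with
`valid qᵢ rᵢ`. -/
inductive IsProtocol {W Q R : Type} (valid : Q → R → Prop) : List (PLet W Q R) → Prop
  | nil : IsProtocol valid []
  | block (u : List W) (q : Q) (r : R) (p : List (PLet W Q R)) :
      valid q r → IsProtocol valid p → IsProtocol valid (pblock u q r ++ p)

/-- A language of correct protocols over the alphabets `W = Γ_wr`, `Q = Γ_qu`,
`R = Γ_re`, satisfying axioms (i)-(v). -/
structure ProtLang (W Q R : Type) where
  valid : Q → R → Prop
  prot : Set (List (PLet W Q R))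
  /-- (i) the empty protocol is correct -/
  empty_mem : [] ∈ prot
  /-- (ii) every member is a protocol -/
  mem_protocol : ∀ p ∈ prot, IsProtocol valid p
  /-- (iii) closure under protocol prefixes -/
  prefix_mem : ∀ p₁ p₂ : List (PLet W Q R), p₁ ++ p₂ ∈ prot → IsProtocol valid p₁ → p₁ ∈ prot
  /-- (iv) every query has some valid response extending the protocol -/
  extend : ∀ p ∈ prot, ∀ (u : List W) (q : Q), ∃ r : R, p ++ pblock u q r ∈ prot
  /-- (v) the response to a query is uniquely determined -/
  resp_unique : ∀ (p : List (PLet W Q R)) (u : List W) (q : Q) (r r' : R)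
      (s : List (PLet W Q R)),
      p ++ pblock u q r ∈ prot → p ++ pblock u q r' ++ s ∈ prot → r' = r

/-! ### Automata with an auxiliary data structure -/

/-- Input-tape letters: input letters plus the two endmarkers. -/
inductive EndM (σ : Type) where
  | lt : σ → EndM σ
  | lmark : EndM σ
  | rmark : EndM σ

/-- The input tape `⊢ w ⊣`. -/
def tape {σ : Type} (w : List σ) : List (EndM σ) :=
  EndM.lmark :: (w.map EndM.lt ++ [EndM.rmark])

/-- A one-way automaton equipped with an auxiliary data structure
(a `1NB_PROT`-automaton), over input alphabet `σ`, with state type `S`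
split into writing states (`isWr`) and query states (`¬ isWr`). -/
structure ProtAut (σ W Q R S : Type) where
  isWr : S → Prop
  s₀ : S
  F : Set S
  s₀_not_F : s₀ ∉ F
  transWr : Set (S × Option (EndM σ) × List W × S)
  transQu : Set (S × Q × R × S)
  wr_src : ∀ t ∈ transWr, isWr t.1
  qu_src : ∀ t ∈ transQu, ¬ isWr t.1
  qu_tgt : ∀ t ∈ transQu, isWr t.2.2.2
  transWr_fin : transWr.Finite

/-- Configurations `(s, v, u, p)`: state, unprocessed input, query tape, protocol. -/
abbrev PConfig (σ W Q R S : Type) := S × List (EndM σ) × List W × List (PLet W Q R)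

/-- The move relation of an automaton with an ADS, relative to the language `P`
of correct protocols. -/
inductive ProtStep {σ W Q R S : Type} (M : ProtAut σ W Q R S)
    (P : Set (List (PLet W Q R))) : PConfig σ W Q R S → PConfig σ W Q R S → Prop
  | wr {s s' : S} {a : Option (EndM σ)} {x : List W} {v : List (EndM σ)}
      {u : List W} {p : List (PLet W Q R)} :
      (s, a, x, s') ∈ M.transWr →
      ProtStep M P (s, a.toList ++ v, u, p) (s', v, u ++ x, p)
  | qu {s s' : S} {q : Q} {r : R} {v : List (EndM σ)} {u : List W}
      {p : List (PLet W Q R)} :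
      (s, q, r, s') ∈ M.transQu → p ++ pblock u q r ∈ P →
      ProtStep M P (s, v, u, p) (s', v, [], p ++ pblock u q r)

/-- `M` has an accepting run on `w` that produces the protocol `p`. -/
def ProtAut.AcceptsWith {σ W Q R S : Type} (M : ProtAut σ W Q R S)
    (P : Set (List (PLet W Q R))) (w : List σ) (p : List (PLet W Q R)) : Prop :=
  ∃ sf ∈ M.F,
    Relation.ReflTransGen (ProtStep M P) (M.s₀, tape w, [], []) (sf, [], [], p)

/-- `M` accepts the word `w`. -/
def ProtAut.Accepts {σ W Q R S : Type} (M : ProtAut σ W Q R S)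
    (P : Set (List (PLet W Q R))) (w : List σ) : Prop :=
  ∃ p ∈ P, M.AcceptsWith P w p

/-- The language accepted by `M`. -/
def ProtAut.Lang {σ W Q R S : Type} (M : ProtAut σ W Q R S)
    (P : Set (List (PLet W Q R))) : Set (List σ) :=
  {w | M.Accepts P w}

/-- `M` is deterministic: each configuration has at most one successor. -/
def ProtAut.Deterministic {σ W Q R S : Type} (M : ProtAut σ W Q R S)
    (P : Set (List (PLet W Q R))) : Prop :=
  ∀ c c₁ c₂ : PConfig σ W Q R S, ProtStep M P c c₁ → ProtStep M P c c₂ → c₁ = c₂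

/-- The class of languages over `σ` accepted by `1NB_PROT`-automata. -/
def ProtCL {W Q R : Type} (P : ProtLang W Q R) (σ : Type) : Set (Set (List σ)) :=
  {L | ∃ (n : ℕ) (M : ProtAut σ W Q R (Fin n)), L = M.Lang P.prot}

/-- The class of languages over `σ` accepted by deterministic `1DB_PROT`-automata. -/
def ProtCLdet {W Q R : Type} (P : ProtLang W Q R) (σ : Type) : Set (Set (List σ)) :=
  {L | ∃ (n : ℕ) (M : ProtAut σ W Q R (Fin n)),
    M.Deterministic P.prot ∧ L = M.Lang P.prot}

/-! ### Concatenation and Kleene star of languages -/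

def LangConcat {σ : Type} (L₁ L₂ : Set (List σ)) : Set (List σ) :=
  {w | ∃ u ∈ L₁, ∃ v ∈ L₂, w = u ++ v}

def LangStar {σ : Type} (L : Set (List σ)) : Set (List σ) :=
  {w | ∃ ws : List (List σ), (∀ u ∈ ws, u ∈ L) ∧ w = ws.flatten}

/-! ### Helpers -/

section Helpers

variable {α β S S' : Type}

lemma FST.Path.trans {T : FST α β S} {q q' q'' u v u' v'} (h : T.Path q u v q')
    (h' : T.Path q' u' v' q'') : T.Path q (u ++ u') (v ++ v') q'' := by
  induction h with
  | refl => simpa using h'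
  | step ht _ ih => simpa [List.append_assoc] using FST.Path.step ht (ih h')

lemma FST.Path.single {T : FST α β S} {q q' x y} (h : (q, x, y, q') ∈ T.trans) :
    T.Path q x.toList y q' := by
  simpa using FST.Path.step h (FST.Path.refl q')

/-- lists of length ≤ 1 form a finite set -/
lemma finite_len_le_one [Finite β] : {l : List β | l.length ≤ 1}.Finite := by
  have : {l : List β | l.length ≤ 1} ⊆ insert [] ((fun c : β => [c]) '' Set.univ) := by
    rintro (_ | ⟨c, (_ | _)⟩) h
    · exact Set.mem_insert _ _
    · exact Set.mem_insert_of_mem _ ⟨c, trivial, rfl⟩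
    · simp at h
  exact (((Set.finite_univ).image _).insert _).subset this

/-- the set of suffixes of output words of a finite transition set, plus `[]` -/
def sufSet {A D : Type} (TS : Set (A × B × List β × D)) : Set (List β) :=
  {l : List β | l = [] ∨ ∃ t ∈ TS, l <:+ t.2.2.1}

lemma sufSet_finite {A D : Type} {TS : Set (A × B × List β × D)} (h : TS.Finite) :
    (sufSet TS).Finite := by
  have hsub : sufSet TS ⊆ insert [] (⋃ t ∈ TS, {l | l ∈ t.2.2.1.tails}) := by
    rintro l (rfl | ⟨t, ht, hl⟩)
    · exact Set.mem_insert _ _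
    · exact Set.mem_insert_of_mem _ (Set.mem_biUnion ht (by simpa [List.mem_tails] using hl))
  exact ((h.biUnion fun t _ => t.2.2.1.tails.finite_toSet).insert _).subset hsub

lemma sufSet_nil {A D : Type} (TS : Set (A × B × List β × D)) : [] ∈ sufSet TS := Or.inl rfl

lemma sufSet_self {A D : Type} {TS : Set (A × B × List β × D)} {t} (ht : t ∈ TS) :
    t.2.2.1 ∈ sufSet TS := Or.inr ⟨t, ht, List.suffix_refl _⟩

lemma sufSet_tail {A D : Type} {TS : Set (A × B × List β × D)} {l l' : List β} {c : β}
    (hl : l ∈ sufSet TS) (h : l = c :: l') : l' ∈ sufSet TS := by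
  rcases hl with rfl | ⟨t, ht, hl⟩
  · simp at h
  · subst h
    exact Or.inr ⟨t, ht, (List.suffix_cons c l').trans hl⟩

end Helpers

/-! ### Protocol parsing lemmas -/

section Protocol

variable {W Q R : Type} {valid : Q → R → Prop}

lemma wrLet_inj {W Q R : Type} {w w' : W} (h : wrLet (Q := Q) (R := R) w = wrLet w') :
    w = w' := by simpa [wrLet] using h

lemma first_nonwr {u u' : List W} {a a' : PLet W Q R} {rest rest' : List (PLet W Q R)}
    (h : u.map wrLet ++ a :: rest = u'.map wrLet ++ a' :: rest')
    (ha : ∀ w, a ≠ wrLet w) (ha' : ∀ w, a' ≠ wrLet w) :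
    u = u' ∧ a = a' ∧ rest = rest' := by
  induction u generalizing u' with
  | nil =>
    cases u' with
    | nil => simpa using h
    | cons w t => simp at h; exact absurd h.1 (ha w)
  | cons w t ih =>
    cases u' with
    | nil => simp at h; exact absurd h.1.symm (ha' w)
    | cons w' t' =>
      simp only [List.map_cons, List.cons_append, List.cons.injEq] at h
      obtain ⟨hw, h2⟩ := h
      obtain ⟨h1, h3, h4⟩ := ih h2
      exact ⟨by rw [show w = w' from wrLet_inj hw, h1], h3, h4⟩

lemma parse {z : List (PLet W Q R)} (hz : IsProtocol valid z) {u : List W} {q : Q} {rest : List (PLet W Q R)}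
    (hmap : z = u.map wrLet ++ quLet q :: rest) :
    ∃ r rest', rest = reLet r :: rest' ∧ valid q r ∧ IsProtocol valid rest' := by
  cases hz with
  | nil => exact absurd hmap.symm (by simp)
  | block u' q' r' p' hv hp' =>
    have h : u'.map wrLet ++ quLet q' :: (reLet r' :: p') = u.map wrLet ++ quLet q :: rest := by
      simpa [pblock] using hmap
    obtain ⟨h1, h2, h3⟩ := first_nonwr h.symm (by simp [quLet, wrLet]) (by simp [quLet, wrLet])
    have hq : q = q' := by simpa [quLet] using h2
    exact ⟨r', p', h3, by rw [hq]; exact hv, hp'⟩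

lemma no_re {z : List (PLet W Q R)} (hz : IsProtocol valid z) {u : List W} {r : R} {rest : List (PLet W Q R)}
    (hmap : z = u.map wrLet ++ reLet r :: rest) : False := by
  cases hz with
  | nil => exact absurd hmap.symm (by simp)
  | block u' q' r' p' hv hp' =>
    have h : u'.map wrLet ++ quLet q' :: (reLet r' :: p') = u.map wrLet ++ reLet r :: rest := by
      simpa [pblock] using hmap
    obtain ⟨-, h2, -⟩ := first_nonwr h.symm (by simp [reLet, wrLet]) (by simp [quLet, wrLet])
    simp [quLet, reLet] at h2

lemma wr_only_aux {z : List (PLet W Q R)} (hz : IsProtocol valid z) {u : List W}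
    (h : z = u.map wrLet) : u = [] := by
  cases hz with
  | nil => simpa using congrArg List.length h.symm
  | block u' q' r' p' hv hp' =>
    exfalso
    have hm : quLet (W := W) (R := R) q' ∈ u.map wrLet := by
      rw [← h]; simp [pblock]
    simp [wrLet, quLet] at hm

lemma wr_only {u : List W} (hz : IsProtocol valid (u.map wrLet : List (PLet W Q R))) :
    u = [] := wr_only_aux hz rfl

lemma IsProtocol.snoc {p : List (PLet W Q R)} (hp : IsProtocol valid p) {q r} (u : List W)
    (hv : valid q r) : IsProtocol valid (p ++ pblock u q r) := by
  induction hp with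
  | nil => simpa using IsProtocol.block u q r [] hv IsProtocol.nil
  | block u' q' r' p' hv' hp' ih =>
    simpa [List.append_assoc] using IsProtocol.block u' q' r' _ hv' ih

lemma IsProtocol.drop {p : List (PLet W Q R)} (hp : IsProtocol valid p)
    (z : List (PLet W Q R)) (h : IsProtocol valid (p ++ z)) : IsProtocol valid z := by
  induction hp generalizing z with
  | nil => simpa using h
  | block u' q' r' p' hv hp' ih =>
    apply ih
    have h' : IsProtocol valid (u'.map wrLet ++ quLet q' :: reLet r' :: (p' ++ z)) := by
      simpa [pblock] using h
    obtain ⟨r0, rest', heq, -, hrest⟩ := parse h' rfl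
    injection heq with h1 h2
    exact h2 ▸ hrest

end Protocol

/-! ### ProtLang corollaries -/

section PL

variable {W Q R : Type} (P : ProtLang W Q R)

lemma block_mem {p : List (PLet W Q R)} {u : List W} {q : Q} {r : R}
    {rest : List (PLet W Q R)} (hp : IsProtocol P.valid p)
    (hfull : p ++ (u.map wrLet ++ quLet q :: reLet r :: rest) ∈ P.prot) :
    p ++ pblock u q r ∈ P.prot ∧ IsProtocol P.valid (p ++ pblock u q r) := by
  have htail := hp.drop _ (P.mem_protocol _ hfull)
  obtain ⟨r0, rest', heq, hv, -⟩ := parse htail rfl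
  injection heq with h1 h2
  have hr0 : r0 = r := by simpa [reLet] using h1.symm
  subst hr0; subst h2
  have hblk := hp.snoc u hv
  refine ⟨P.prefix_mem _ rest ?_ hblk, hblk⟩
  simpa [pblock, List.append_assoc] using hfull

lemma after_qu {p : List (PLet W Q R)} {u : List W} {q : Q} {rest : List (PLet W Q R)}
    (hp : IsProtocol P.valid p)
    (hfull : p ++ (u.map wrLet ++ quLet q :: rest) ∈ P.prot) :
    ∃ r rest', rest = reLet r :: rest' := by
  obtain ⟨r, rest', heq, -, -⟩ := parse (hp.drop _ (P.mem_protocol _ hfull)) rfl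
  exact ⟨r, rest', heq⟩

lemma no_re_mem {p : List (PLet W Q R)} {u : List W} {r : R} {rest : List (PLet W Q R)}
    (hp : IsProtocol P.valid p)
    (hfull : p ++ (u.map wrLet ++ reLet r :: rest) ∈ P.prot) : False :=
  no_re (hp.drop _ (P.mem_protocol _ hfull)) rfl

lemma tail_nil {p : List (PLet W Q R)} {u : List W}
    (hp : IsProtocol P.valid p) (hfull : p ++ u.map wrLet ∈ P.prot) : u = [] :=
  wr_only (hp.drop _ (P.mem_protocol _ hfull))

end PL

/-! ### Relabeling of transducers and automata -/

section Relabel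

variable {α β S S' : Type}

def FST.relabel (T : FST α β S) (e : S ≃ S') : FST α β S' where
  init := e T.init
  accept := e '' T.accept
  trans := (fun t => (e t.1, t.2.1, t.2.2.1, e t.2.2.2)) '' T.trans
  trans_fin := T.trans_fin.image _

lemma FST.relabel_path (T : FST α β S) (e : S ≃ S') {q q' u v} (h : T.Path q u v q') :
    (T.relabel e).Path (e q) u v (e q') := by
  induction h with
  | refl => exact FST.Path.refl _
  | step ht _ ih => exact FST.Path.step ⟨_, ht, rfl⟩ ih

lemma FST.relabel_path_inv (T : FST α β S) (e : S ≃ S') {q q' u v}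
    (h : (T.relabel e).Path q u v q') : T.Path (e.symm q) u v (e.symm q') := by
  induction h with
  | refl => exact FST.Path.refl _
  | step ht _ ih =>
    obtain ⟨⟨a, x0, y0, b⟩, ht0, heq⟩ := ht
    injection heq with h1 h2
    injection h2 with h2 h3
    injection h3 with h3 h4
    subst h1; subst h2; subst h3; subst h4
    simp only [Equiv.symm_apply_apply] at ih ⊢
    exact FST.Path.step ht0 ih

lemma FST.relabel_img (T : FST α β S) (e : S ≃ S') (B : Set (List α)) :
    (T.relabel e).Img B = T.Img B := by
  ext v
  constructor
  · rintro ⟨u, hu, f, hf, hpath⟩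
    obtain ⟨f0, hf0, rfl⟩ := hf
    refine ⟨u, hu, f0, hf0, ?_⟩
    have := T.relabel_path_inv e hpath
    simpa [FST.relabel] using this
  · rintro ⟨u, hu, f, hf, hpath⟩
    exact ⟨u, hu, e f, ⟨f, hf, rfl⟩, T.relabel_path e hpath⟩

end Relabel

section RelabelAut

variable {σ W Q R S S' : Type}

def ProtAut.relabel (M : ProtAut σ W Q R S) (e : S ≃ S') : ProtAut σ W Q R S' where
  isWr s' := M.isWr (e.symm s')
  s₀ := e M.s₀
  F := e '' M.F
  s₀_not_F := by rintro ⟨s, hs, hes⟩; exact M.s₀_not_F ((e.injective hes) ▸ hs)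
  transWr := (fun t => (e t.1, t.2.1, t.2.2.1, e t.2.2.2)) '' M.transWr
  transQu := (fun t => (e t.1, t.2.1, t.2.2.1, e t.2.2.2)) '' M.transQu
  wr_src := by rintro t ⟨t0, h0, rfl⟩; simpa using M.wr_src t0 h0
  qu_src := by rintro t ⟨t0, h0, rfl⟩; simpa using M.qu_src t0 h0
  qu_tgt := by rintro t ⟨t0, h0, rfl⟩; simpa using M.qu_tgt t0 h0
  transWr_fin := M.transWr_fin.image _

lemma relabel_step {M : ProtAut σ W Q R S} {e : S ≃ S'} {P : Set (List (PLet W Q R))}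
    {c c' : PConfig σ W Q R S} (h : ProtStep M P c c') :
    ProtStep (M.relabel e) P (e c.1, c.2) (e c'.1, c'.2) := by
  cases h with
  | wr ht => exact ProtStep.wr ⟨_, ht, rfl⟩
  | qu ht hm => exact ProtStep.qu ⟨_, ht, rfl⟩ hm

lemma relabel_step_inv {M : ProtAut σ W Q R S} {e : S ≃ S'} {P : Set (List (PLet W Q R))}
    {c c' : PConfig σ W Q R S'} (h : ProtStep (M.relabel e) P c c') :
    ProtStep M P (e.symm c.1, c.2) (e.symm c'.1, c'.2) := by
  cases h with
  | wr ht =>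
    obtain ⟨⟨a, x0, y0, b⟩, ht0, heq⟩ := ht
    injection heq with h1 h2
    injection h2 with h2 h3
    injection h3 with h3 h4
    subst h1; subst h2; subst h3; subst h4
    simpa only [Equiv.symm_apply_apply] using ProtStep.wr (M := M) (P := P) ht0
  | qu ht hm =>
    obtain ⟨⟨a, x0, y0, b⟩, ht0, heq⟩ := ht
    injection heq with h1 h2
    injection h2 with h2 h3
    injection h3 with h3 h4
    subst h1; subst h2; subst h3; subst h4
    simpa only [Equiv.symm_apply_apply] using ProtStep.qu (M := M) ht0 hm

lemma ProtAut.relabel_lang (M : ProtAut σ W Q R S) (e : S ≃ S')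
    (P : Set (List (PLet W Q R))) : (M.relabel e).Lang P = M.Lang P := by
  ext w
  constructor
  · rintro ⟨p, hp, sf, hsf, hrun⟩
    obtain ⟨s0f, hs0f, rfl⟩ := hsf
    refine ⟨p, hp, s0f, hs0f, ?_⟩
    have := Relation.ReflTransGen.lift
      (fun c : PConfig σ W Q R S' => ((e.symm c.1 : S), c.2))
      (fun a b h => relabel_step_inv h) _ _ hrun
    simpa [ProtAut.relabel, Function.onFun] using this
  · rintro ⟨p, hp, sf, hsf, hrun⟩
    refine ⟨p, hp, e sf, ⟨sf, hsf, rfl⟩, ?_⟩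
    have := Relation.ReflTransGen.lift
      (fun c : PConfig σ W Q R S => ((e c.1 : S'), c.2))
      (fun a b h => relabel_step (e := e) h) _ _ hrun
    simpa [ProtAut.relabel] using this

end RelabelAut

/-! ### Direction 1 : from automaton to transducer -/

section Dir1

inductive Ph where
  | p0 | p1 | p2
deriving DecidableEq

instance : Fintype Ph := ⟨{.p0, .p1, .p2}, by intro x; cases x <;> simp⟩

variable {σ W Q R S : Type}

def Vph (ph : Ph) (z : List σ) : List (EndM σ) :=
  match ph with
  | .p0 => .lmark :: (z.map .lt ++ [.rmark])
  | .p1 => z.map .lt ++ [.rmark]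
  | .p2 => z.map .lt

variable (M : ProtAut σ W Q R S)

abbrev TS1 := Ph × ((S × ↥(sufSet M.transWr)) ⊕ (R × S))

def nilS : ↥(sufSet M.transWr) := ⟨[], sufSet_nil _⟩

inductive Tr : TS1 M → Option (PLet W Q R) → List σ → TS1 M → Prop
  | mv_eps {s x s'} (h : (s, none, x, s') ∈ M.transWr) (ph : Ph)
      (hx : x ∈ sufSet M.transWr) :
      Tr (ph, .inl (s, nilS M)) none [] (ph, .inl (s', ⟨x, hx⟩))
  | mv_lmark {s x s'} (h : (s, some .lmark, x, s') ∈ M.transWr)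
      (hx : x ∈ sufSet M.transWr) :
      Tr (.p0, .inl (s, nilS M)) none [] (.p1, .inl (s', ⟨x, hx⟩))
  | mv_lt {s c x s'} (h : (s, some (.lt c), x, s') ∈ M.transWr)
      (hx : x ∈ sufSet M.transWr) :
      Tr (.p1, .inl (s, nilS M)) none [c] (.p1, .inl (s', ⟨x, hx⟩))
  | mv_rmark {s x s'} (h : (s, some .rmark, x, s') ∈ M.transWr)
      (hx : x ∈ sufSet M.transWr) :
      Tr (.p1, .inl (s, nilS M)) none [] (.p2, .inl (s', ⟨x, hx⟩))
  | rd {s w} (l l' : ↥(sufSet M.transWr)) (h : l.val = w :: l'.val) (ph : Ph) :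
      Tr (ph, .inl (s, l)) (some (wrLet w)) [] (ph, .inl (s, l'))
  | qu1 {s q r s'} (h : (s, q, r, s') ∈ M.transQu) (ph : Ph) :
      Tr (ph, .inl (s, nilS M)) (some (quLet q)) [] (ph, .inr (r, s'))
  | qu2 (r : R) (s' : S) (ph : Ph) :
      Tr (ph, .inr (r, s')) (some (reLet r)) [] (ph, .inl (s', nilS M))

variable [Finite S] [Finite W] [Finite Q] [Finite R] [Finite σ]

noncomputable def T1 : FST (PLet W Q R) σ (TS1 M) where
  init := (.p0, .inl (M.s₀, nilS M))
  accept := {st | ∃ sf ∈ M.F, st = (.p2, .inl (sf, nilS M))}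
  trans := {t | Tr M t.1 t.2.1 t.2.2.1 t.2.2.2}
  trans_fin := by
    haveI : Finite ↥(sufSet M.transWr) := (sufSet_finite M.transWr_fin).to_subtype
    haveI : Finite (Option (PLet W Q R)) := by
      cases nonempty_fintype (PLet W Q R); infer_instance
    apply Set.Finite.subset
      (((Set.finite_univ (α := TS1 M)).prod ((Set.finite_univ (α := Option (PLet W Q R))).prod
        ((finite_len_le_one (β := σ)).prod (Set.finite_univ (α := TS1 M))))))
    rintro ⟨st, x, y, st'⟩ h
    simp only [Set.mem_setOf_eq] at h
    refine Set.mem_prod.2 ⟨trivial, Set.mem_prod.2 ⟨trivial, Set.mem_prod.2 ⟨?_, trivial⟩⟩⟩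
    cases h <;> simp

lemma read_path (s' : S) (ph : Ph) :
    ∀ (lv : List W) (hl : lv ∈ sufSet M.transWr),
    (T1 M).Path (ph, .inl (s', ⟨lv, hl⟩)) (lv.map wrLet) [] (ph, .inl (s', nilS M)) := by
  intro lv
  induction lv with
  | nil => intro hl; exact FST.Path.refl _
  | cons w t ih =>
    intro hl
    have ht : t ∈ sufSet M.transWr := sufSet_tail hl rfl
    have step : Tr M (ph, .inl (s', ⟨w :: t, hl⟩)) (some (wrLet w)) []
        (ph, .inl (s', ⟨t, ht⟩)) := Tr.rd ⟨w :: t, hl⟩ ⟨t, ht⟩ rfl ph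
    simpa using FST.Path.step (T := T1 M) step (ih ht)


lemma dir1_fwd {P : Set (List (PLet W Q R))} {cfg cfg' : PConfig σ W Q R S}
    (hrun : Relation.ReflTransGen (ProtStep M P) cfg cfg') :
    ∀ s v u p sf pf (ph : Ph) (z : List σ), cfg = (s, v, u, p) → cfg' = (sf, [], [], pf) →
    v = Vph ph z → (ph = .p2 → z = []) →
    ∃ ext, pf = p ++ u.map wrLet ++ ext ∧
      (T1 M).Path (ph, .inl (s, nilS M)) ext z (.p2, .inl (sf, nilS M)) := by
  induction hrun using Relation.ReflTransGen.head_induction_on with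
  | refl =>
    rintro s v u p sf pf ph z h1 h2 hv hp2
    rw [h1] at h2
    injection h2 with e1 e2; injection e2 with e2 e3; injection e3 with e3 e4
    subst e1; subst e2; subst e3; subst e4
    cases ph with
    | p0 => simp [Vph] at hv
    | p1 => simp [Vph] at hv
    | p2 =>
      have hz : z = [] := hp2 rfl
      subst hz
      exact ⟨[], by simp, FST.Path.refl _⟩
  | head hstep htail ih =>
    rintro s v u p sf pf ph z rfl h2 hv hp2
    cases hstep with
    | @wr s s' a x v0 u0 p0 ht =>
      cases a with
      | none =>
        simp only [Option.toList_none, List.nil_append] at hv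
        obtain ⟨ext', hpf, hpath⟩ := ih s' v0 (u ++ x) p sf pf ph z rfl h2 hv hp2
        refine ⟨x.map wrLet ++ ext', by simp [hpf, List.append_assoc], ?_⟩
        have hx : x ∈ sufSet M.transWr := sufSet_self ht
        have := FST.Path.step (T := T1 M) (Tr.mv_eps ht ph hx)
          ((read_path M s' ph x hx).trans hpath)
        simpa using this
      | some a =>
        cases a with
        | lmark =>
          cases ph with
          | p0 =>
            simp only [Vph, Option.toList_some, List.cons_append, List.nil_append,
              List.cons.injEq] at hv
            obtain ⟨-, hv⟩ := hv
            obtain ⟨ext', hpf, hpath⟩ := ih s' v0 (u ++ x) p sf pf .p1 z rfl h2 hv (by simp)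
            refine ⟨x.map wrLet ++ ext', by simp [hpf, List.append_assoc], ?_⟩
            have hx : x ∈ sufSet M.transWr := sufSet_self ht
            have := FST.Path.step (T := T1 M) (Tr.mv_lmark ht hx)
              ((read_path M s' .p1 x hx).trans hpath)
            simpa using this
          | p1 => cases z <;> simp [Vph] at hv
          | p2 => rw [hp2 rfl] at hv; simp [Vph] at hv
        | lt c =>
          cases ph with
          | p0 => simp [Vph] at hv
          | p1 =>
            cases z with
            | nil => simp [Vph] at hv
            | cons c0 z' =>
              simp only [Vph, Option.toList_some, List.map_cons, List.cons_append,
                List.cons.injEq] at hv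
              obtain ⟨hc, hv⟩ := hv
              have hc' : c0 = c := by simpa using hc.symm
              subst hc'
              obtain ⟨ext', hpf, hpath⟩ := ih s' v0 (u ++ x) p sf pf .p1 z' rfl h2 hv (by simp)
              refine ⟨x.map wrLet ++ ext', by simp [hpf, List.append_assoc], ?_⟩
              have hx : x ∈ sufSet M.transWr := sufSet_self ht
              have := FST.Path.step (T := T1 M) (Tr.mv_lt ht hx)
                ((read_path M s' .p1 x hx).trans hpath)
              simpa using this
          | p2 => rw [hp2 rfl] at hv; simp [Vph] at hv
        | rmark =>
          cases ph with
          | p0 => simp [Vph] at hv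
          | p1 =>
            cases z with
            | cons c0 z' => simp [Vph] at hv
            | nil =>
              have hv0 : v0 = [] := by simpa [Vph] using hv
              subst hv0
              obtain ⟨ext', hpf, hpath⟩ := ih s' [] (u ++ x) p sf pf .p2 [] rfl h2
                (by simp [Vph]) (fun _ => rfl)
              refine ⟨x.map wrLet ++ ext', by simp [hpf, List.append_assoc], ?_⟩
              have hx : x ∈ sufSet M.transWr := sufSet_self ht
              have := FST.Path.step (T := T1 M) (Tr.mv_rmark ht hx)
                ((read_path M s' .p2 x hx).trans hpath)
              simpa using this
          | p2 => rw [hp2 rfl] at hv; simp [Vph] at hv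
    | @qu s s' q r v0 u0 p0 ht hm =>
      obtain ⟨ext', hpf, hpath⟩ := ih s' v [] (p ++ pblock u q r) sf pf ph z rfl h2 hv hp2
      refine ⟨quLet q :: reLet r :: ext', by simp [hpf, pblock, List.append_assoc], ?_⟩
      have := FST.Path.step (T := T1 M) (Tr.qu1 ht ph)
        (FST.Path.step (T := T1 M) (Tr.qu2 r s' ph) hpath)
      simpa using this

def Inn1 (P : ProtLang W Q R) (sf : S) (ph : Ph) (s : S) (ext : List (PLet W Q R))
    (z : List σ) : Prop :=
  ∀ p u, IsProtocol P.valid p → p ++ u.map wrLet ++ ext ∈ P.prot →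
    Relation.ReflTransGen (ProtStep M P.prot) (s, Vph ph z, u, p)
      (sf, [], [], p ++ u.map wrLet ++ ext)

def Mot1 (P : ProtLang W Q R) (sf : S) : TS1 M → List (PLet W Q R) → List σ → Prop
  | (ph, .inl (s, l)), ext, z =>
      (ph = .p2 → z = []) ∧ ∃ ext', ext = l.val.map wrLet ++ ext' ∧ Inn1 M P sf ph s ext' z
  | (ph, .inr (r, s')), ext, z =>
      (ph = .p2 → z = []) ∧ ∃ ext', ext = reLet r :: ext' ∧ Inn1 M P sf ph s' ext' z

lemma dir1_bwd {P : ProtLang W Q R} {sf : S} {st : TS1 M} {ext : List (PLet W Q R)}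
    {z : List σ} {fin : TS1 M} (hpath : (T1 M).Path st ext z fin)
    (hfin : fin = (.p2, .inl (sf, nilS M))) : Mot1 M P sf st ext z := by
  induction hpath with
  | refl q =>
    subst hfin
    refine ⟨fun _ => rfl, [], by simp [nilS], ?_⟩
    intro p u hp hm
    have hu : u = [] := tail_nil P hp (by simpa using hm)
    subst hu
    simp only [List.map_nil, List.append_nil, Vph, List.map_nil]
    exact Relation.ReflTransGen.refl
  | @step st stmid fin x y ext0 z0 ht hrest ih =>
    have ih' := ih hfin
    have ht' : Tr M st x y stmid := ht
    cases ht' with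
    | @mv_eps s x0 s' h ph hx =>
      obtain ⟨hz2, ext', hext, hInner⟩ := ih'
      subst hext
      refine ⟨hz2, x0.map wrLet ++ ext', by simp [nilS], ?_⟩
      intro p u hp hm
      have hm' : p ++ (u ++ x0).map wrLet ++ ext' ∈ P.prot := by
        simpa [List.map_append, List.append_assoc] using hm
      have hrun := hInner p (u ++ x0) hp hm'
      have hstep : ProtStep M P.prot (s, Vph ph ([] ++ z0), u, p)
          (s', Vph ph z0, u ++ x0, p) := by
        simpa using ProtStep.wr (M := M) (P := P.prot) (a := none) (v := Vph ph z0) h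
      simp only [List.nil_append] at hstep ⊢
      have : Relation.ReflTransGen (ProtStep M P.prot) (s, Vph ph z0, u, p)
          (sf, [], [], p ++ (u ++ x0).map wrLet ++ ext') := hrun.head hstep
      simpa [List.map_append, List.append_assoc] using this
    | @mv_lmark s x0 s' h hx =>
      obtain ⟨hz2, ext', hext, hInner⟩ := ih'
      subst hext
      refine ⟨by simp, x0.map wrLet ++ ext', by simp [nilS], ?_⟩
      intro p u hp hm
      have hm' : p ++ (u ++ x0).map wrLet ++ ext' ∈ P.prot := by
        simpa [List.map_append, List.append_assoc] using hm
      have hrun := hInner p (u ++ x0) hp hm'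
      have hstep : ProtStep M P.prot (s, (some EndM.lmark).toList ++ Vph .p1 z0, u, p)
          (s', Vph .p1 z0, u ++ x0, p) := ProtStep.wr h
      have hv : Vph .p0 ([] ++ z0) = (some (EndM.lmark (σ := σ))).toList ++ Vph .p1 z0 := by
        simp [Vph]
      rw [List.nil_append] at hv ⊢
      rw [hv]
      simpa [List.map_append, List.append_assoc] using hrun.head hstep
    | @mv_lt s c x0 s' h hx =>
      obtain ⟨hz2, ext', hext, hInner⟩ := ih'
      subst hext
      refine ⟨by simp, x0.map wrLet ++ ext', by simp [nilS], ?_⟩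
      intro p u hp hm
      have hm' : p ++ (u ++ x0).map wrLet ++ ext' ∈ P.prot := by
        simpa [List.map_append, List.append_assoc] using hm
      have hrun := hInner p (u ++ x0) hp hm'
      have hstep : ProtStep M P.prot (s, (some (EndM.lt c)).toList ++ Vph .p1 z0, u, p)
          (s', Vph .p1 z0, u ++ x0, p) := ProtStep.wr h
      have hv : Vph .p1 ([c] ++ z0) = (some (EndM.lt c)).toList ++ Vph .p1 z0 := by
        simp [Vph]
      rw [hv]
      simpa [List.map_append, List.append_assoc] using hrun.head hstep
    | @mv_rmark s x0 s' h hx =>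
      obtain ⟨hz2, ext', hext, hInner⟩ := ih'
      subst hext
      have hz0 : z0 = [] := hz2 rfl
      subst hz0
      refine ⟨by simp, x0.map wrLet ++ ext', by simp [nilS], ?_⟩
      intro p u hp hm
      have hm' : p ++ (u ++ x0).map wrLet ++ ext' ∈ P.prot := by
        simpa [List.map_append, List.append_assoc] using hm
      have hrun := hInner p (u ++ x0) hp hm'
      have hstep : ProtStep M P.prot (s, (some (EndM.rmark (σ := σ))).toList ++ Vph .p2 [], u, p)
          (s', Vph .p2 [], u ++ x0, p) := ProtStep.wr h
      have hv : Vph .p1 ([] ++ ([] : List σ)) =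
          (some (EndM.rmark (σ := σ))).toList ++ Vph .p2 [] := by simp [Vph]
      rw [hv]
      simpa [List.map_append, List.append_assoc] using hrun.head hstep
    | @rd s w l l' hl ph =>
      obtain ⟨hz2, ext', hext, hInner⟩ := ih'
      subst hext
      exact ⟨hz2, ext', by simp [hl], hInner⟩
    | @qu1 s q r s' h ph =>
      obtain ⟨hz2, ext', hext, hInner⟩ := ih'
      subst hext
      refine ⟨hz2, quLet q :: reLet r :: ext', by simp [nilS], ?_⟩
      intro p u hp hm
      have hm2 : p ++ (u.map wrLet ++ quLet q :: reLet r :: ext') ∈ P.prot := by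
        simpa [List.append_assoc] using hm
      obtain ⟨hblkmem, hblkiso⟩ := block_mem P hp hm2
      have hstep : ProtStep M P.prot (s, Vph ph z0, u, p)
          (s', Vph ph z0, [], p ++ pblock u q r) := ProtStep.qu h hblkmem
      have hm3 : (p ++ pblock u q r) ++ ([] : List W).map wrLet ++ ext' ∈ P.prot := by
        simpa [pblock, List.append_assoc] using hm2
      have hrun := hInner (p ++ pblock u q r) [] hblkiso hm3
      have := hrun.head hstep
      have hfinal : (p ++ pblock u q r) ++ ([] : List W).map wrLet ++ ext' =
          p ++ u.map wrLet ++ (quLet q :: reLet r :: ext') := by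
        simp [pblock, List.append_assoc]
      rw [hfinal] at this
      simpa using this
    | @qu2 r s' ph =>
      obtain ⟨hz2, ext', hext, hInner⟩ := ih'
      exact ⟨hz2, ext', by rw [hext]; simp [nilS], hInner⟩

lemma dir1_lang (P : ProtLang W Q R) : (T1 M).Img P.prot = M.Lang P.prot := by
  ext w
  constructor
  · rintro ⟨p, hp, f, hf, hpath⟩
    obtain ⟨sf, hsf, rfl⟩ := hf
    obtain ⟨-, ext', hext, hInner⟩ := dir1_bwd M hpath rfl
    have hext' : p = ext' := by simpa [nilS] using hext
    subst hext'
    have hrun := hInner [] [] IsProtocol.nil (by simpa using hp)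
    refine ⟨p, hp, sf, hsf, ?_⟩
    simpa [Vph, tape] using hrun
  · rintro ⟨p, hp, sf, hsf, hrun⟩
    obtain ⟨ext, hext, hpath⟩ := dir1_fwd M hrun M.s₀ (tape w) [] [] sf p .p0 w rfl rfl
      (by simp [Vph, tape]) (by simp)
    have : p = ext := by simpa using hext
    subst this
    exact ⟨p, hp, (.p2, .inl (sf, nilS M)), ⟨sf, hsf, rfl⟩, hpath⟩

end Dir1

/-! ### Direction 2 : from transducer to automaton -/

instance myFinOpt {α : Type} [Finite α] : Finite (Option α) := by
  cases nonempty_fintype α; infer_instance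

instance myFinEndM {σ : Type} [Finite σ] : Finite (EndM σ) := by
  apply Finite.of_injective (fun e : EndM σ => match e with
    | .lt c => (Sum.inl c : σ ⊕ Bool)
    | .lmark => Sum.inr true
    | .rmark => Sum.inr false)
  rintro (_|_|_) (_|_|_) h <;> simp_all

section Dir2

variable {σ W Q R S : Type}

variable (T : FST (PLet W Q R) σ S)

abbrev MS2 := (Unit ⊕ Unit) ⊕ ((S × ↥(sufSet T.trans) × Option Q) ⊕ (S × Q))

def stInit : MS2 T := .inl (.inl ())
def stAcc : MS2 T := .inl (.inr ())
def wrS (t : S) (l : ↥(sufSet T.trans)) (oq : Option Q) : MS2 T := .inr (.inl (t, l, oq))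
def quS (t : S) (q : Q) : MS2 T := .inr (.inr (t, q))
def nil2 : ↥(sufSet T.trans) := ⟨[], sufSet_nil _⟩

def isWr2 : MS2 T → Prop
  | .inr (.inr _) => False
  | _ => True

def oqE (oq : Option Q) : List (PLet W Q R) := oq.elim [] fun q => [quLet q]

inductive TrW : MS2 T → Option (EndM σ) → List W → MS2 T → Prop
  | start : TrW (stInit T) (some .lmark) [] (wrS T T.init (nil2 T) none)
  | eps {t y t'} (h : (t, none, y, t') ∈ T.trans) (oq : Option Q)
      (hy : y ∈ sufSet T.trans) :
      TrW (wrS T t (nil2 T) oq) none [] (wrS T t' ⟨y, hy⟩ oq)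
  | wr {t w y t'} (h : (t, some (wrLet w), y, t') ∈ T.trans) (hy : y ∈ sufSet T.trans) :
      TrW (wrS T t (nil2 T) none) none [w] (wrS T t' ⟨y, hy⟩ none)
  | qu {t q y t'} (h : (t, some (quLet q), y, t') ∈ T.trans) (hy : y ∈ sufSet T.trans) :
      TrW (wrS T t (nil2 T) none) none [] (wrS T t' ⟨y, hy⟩ (some q))
  | toqu (t : S) (q : Q) : TrW (wrS T t (nil2 T) (some q)) none [] (quS T t q)
  | rd {t c} (l l' : ↥(sufSet T.trans)) (h : l.val = c :: l'.val) (oq : Option Q) :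
      TrW (wrS T t l oq) (some (.lt c)) [] (wrS T t l' oq)
  | fin {t} (h : t ∈ T.accept) : TrW (wrS T t (nil2 T) none) (some .rmark) [] (stAcc T)

inductive TrQ : MS2 T → Q → R → MS2 T → Prop
  | qu {t r y t'} (h : (t, some (reLet r), y, t') ∈ T.trans) (q : Q)
      (hy : y ∈ sufSet T.trans) :
      TrQ (quS T t q) q r (wrS T t' ⟨y, hy⟩ none)

variable [Finite S] [Finite W] [Finite Q] [Finite R] [Finite σ]

noncomputable def M2 : ProtAut σ W Q R (MS2 T) where
  isWr := isWr2 T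
  s₀ := stInit T
  F := {stAcc T}
  s₀_not_F := by simp [stInit, stAcc]
  transWr := {t | TrW T t.1 t.2.1 t.2.2.1 t.2.2.2}
  transQu := {t | TrQ T t.1 t.2.1 t.2.2.1 t.2.2.2}
  wr_src := by
    rintro ⟨st, x, y, st'⟩ h
    simp only [Set.mem_setOf_eq] at h
    cases h <;> trivial
  qu_src := by
    rintro ⟨st, x, y, st'⟩ h
    simp only [Set.mem_setOf_eq] at h
    cases h
    exact fun f => f
  qu_tgt := by
    rintro ⟨st, x, y, st'⟩ h
    simp only [Set.mem_setOf_eq] at h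
    cases h
    trivial
  transWr_fin := by
    haveI : Finite ↥(sufSet T.trans) := (sufSet_finite T.trans_fin).to_subtype
    apply Set.Finite.subset
      (((Set.finite_univ (α := MS2 T)).prod
        ((Set.finite_univ (α := Option (EndM σ))).prod
        ((finite_len_le_one (β := W)).prod (Set.finite_univ (α := MS2 T))))))
    rintro ⟨st, x, y, st'⟩ h
    simp only [Set.mem_setOf_eq] at h
    refine Set.mem_prod.2 ⟨trivial, Set.mem_prod.2 ⟨trivial, Set.mem_prod.2 ⟨?_, trivial⟩⟩⟩
    cases h <;> simp

lemma read_run2 {P : Set (List (PLet W Q R))} (t : S) (oq : Option Q) :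
    ∀ (y : List σ) (hy : y ∈ sufSet T.trans) (v : List (EndM σ)) (u : List W)
      (p : List (PLet W Q R)),
    Relation.ReflTransGen (ProtStep (M2 T) P)
      (wrS T t ⟨y, hy⟩ oq, y.map .lt ++ v, u, p) (wrS T t (nil2 T) oq, v, u, p) := by
  intro y
  induction y with
  | nil => intro hy v u p; exact Relation.ReflTransGen.refl
  | cons c l ih =>
    intro hy v u p
    have hl : l ∈ sufSet T.trans := sufSet_tail hy rfl
    have hstep : ProtStep (M2 T) P (wrS T t ⟨c :: l, hy⟩ oq, (c :: l).map .lt ++ v, u, p)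
        (wrS T t ⟨l, hl⟩ oq, l.map .lt ++ v, u, p) := by
      have h0 := ProtStep.wr (M := M2 T) (P := P) (a := some (.lt c)) (x := [])
        (v := l.map .lt ++ v) (u := u) (p := p)
        (TrW.rd (T := T) (t := t) ⟨c :: l, hy⟩ ⟨l, hl⟩ rfl oq)
      simpa [wrS] using h0
    exact (ih hl v u p).head hstep

lemma dir2_fwd {P : ProtLang W Q R} {t : S} {ext : List (PLet W Q R)} {z : List σ} {f : S}
    (hpath : T.Path t ext z f) :
    f ∈ T.accept →
    ∀ (p : List (PLet W Q R)) (u : List W) (oq : Option Q),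
    IsProtocol P.valid p →
    p ++ u.map wrLet ++ oqE oq ++ ext ∈ P.prot →
    Relation.ReflTransGen (ProtStep (M2 T) P.prot)
      (wrS T t (nil2 T) oq, z.map .lt ++ [.rmark], u, p)
      (stAcc T, [], [], p ++ u.map wrLet ++ oqE oq ++ ext) := by
  induction hpath with
  | refl q =>
    intro hf p u oq hp hm
    cases oq with
    | some q0 =>
      exfalso
      have hm' : p ++ (u.map wrLet ++ quLet q0 :: ([] : List (PLet W Q R))) ∈ P.prot := by
        simpa [oqE, List.append_assoc] using hm
      obtain ⟨r, rest', heq⟩ := after_qu P hp hm'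
      simp at heq
    | none =>
      have hu : u = [] := tail_nil P hp (by simpa [oqE] using hm)
      subst hu
      have hstep : ProtStep (M2 T) P.prot (wrS T q (nil2 T) none, [.rmark], [], p)
          (stAcc T, [], [], p) := by
        have h0 := ProtStep.wr (M := M2 T) (P := P.prot) (a := some .rmark) (x := [])
          (v := []) (u := []) (p := p) (TrW.fin hf)
        simpa [wrS, stAcc] using h0
      simpa [oqE] using Relation.ReflTransGen.single hstep
  | @step q qmid qf x y ext0 z0 ht hrest ih =>
    intro hf
    have ih' := ih hf
    cases x with
    | none =>
      intro p u oq hp hm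
      have hy := sufSet_self ht
      have h1 : ProtStep (M2 T) P.prot
          (wrS T q (nil2 T) oq, (y ++ z0).map .lt ++ [.rmark], u, p)
          (wrS T qmid ⟨y, hy⟩ oq, y.map .lt ++ (z0.map .lt ++ [.rmark]), u, p) := by
        have h0 := ProtStep.wr (M := M2 T) (P := P.prot) (a := none) (x := [])
          (v := y.map .lt ++ (z0.map .lt ++ [.rmark])) (u := u) (p := p)
          (TrW.eps ht oq hy)
        simpa [List.map_append, List.append_assoc, wrS] using h0
      have h2 := read_run2 T (P := P.prot) qmid oq y hy (z0.map .lt ++ [.rmark]) u p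
      have h3 := ih' p u oq hp (by simpa using hm)
      have := Relation.ReflTransGen.head h1 (h2.trans h3)
      simpa using this
    | some a =>
      cases a with
      | inl w =>
        intro p u oq hp hm
        cases oq with
        | some q0 =>
          exfalso
          have hm' : p ++ (u.map wrLet ++ quLet q0 :: (wrLet w :: ext0)) ∈ P.prot := by
            simpa [oqE, List.append_assoc, wrLet] using hm
          obtain ⟨r, rest', heq⟩ := after_qu P hp hm'
          simp [wrLet, reLet] at heq
        | none =>
          have hy := sufSet_self ht
          have h1 : ProtStep (M2 T) P.prot
              (wrS T q (nil2 T) none, (y ++ z0).map .lt ++ [.rmark], u, p)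
              (wrS T qmid ⟨y, hy⟩ none, y.map .lt ++ (z0.map .lt ++ [.rmark]),
                u ++ [w], p) := by
            have h0 := ProtStep.wr (M := M2 T) (P := P.prot) (a := none) (x := [w])
              (v := y.map .lt ++ (z0.map .lt ++ [.rmark])) (u := u) (p := p)
              (TrW.wr ht hy)
            simpa [List.map_append, List.append_assoc, wrS] using h0
          have h2 := read_run2 T (P := P.prot) qmid none y hy
            (z0.map .lt ++ [.rmark]) (u ++ [w]) p
          have h3 := ih' p (u ++ [w]) none hp
            (by simpa [oqE, List.map_append, List.append_assoc, wrLet] using hm)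
          have := Relation.ReflTransGen.head h1 (h2.trans h3)
          simpa [oqE, List.map_append, List.append_assoc, wrLet] using this
      | inr b =>
        cases b with
        | inl q1 =>
          intro p u oq hp hm
          cases oq with
          | some q0 =>
            exfalso
            have hm' : p ++ (u.map wrLet ++ quLet q0 :: (quLet q1 :: ext0)) ∈ P.prot := by
              simpa [oqE, List.append_assoc, quLet] using hm
            obtain ⟨r, rest', heq⟩ := after_qu P hp hm'
            simp [quLet, reLet] at heq
          | none =>
            have hy := sufSet_self ht
            have h1 : ProtStep (M2 T) P.prot
                (wrS T q (nil2 T) none, (y ++ z0).map .lt ++ [.rmark], u, p)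
                (wrS T qmid ⟨y, hy⟩ (some q1), y.map .lt ++ (z0.map .lt ++ [.rmark]),
                  u, p) := by
              have h0 := ProtStep.wr (M := M2 T) (P := P.prot) (a := none) (x := [])
                (v := y.map .lt ++ (z0.map .lt ++ [.rmark])) (u := u) (p := p)
                (TrW.qu ht hy)
              simpa [List.map_append, List.append_assoc, wrS] using h0
            have h2 := read_run2 T (P := P.prot) qmid (some q1) y hy
              (z0.map .lt ++ [.rmark]) u p
            have h3 := ih' p u (some q1) hp
              (by simpa [oqE, List.append_assoc, quLet] using hm)
            have := Relation.ReflTransGen.head h1 (h2.trans h3)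
            simpa [oqE, List.append_assoc, quLet] using this
        | inr r =>
          intro p u oq hp hm
          cases oq with
          | none =>
            exfalso
            exact no_re_mem P hp (by simpa [oqE, List.append_assoc, reLet] using hm)
          | some q0 =>
            have hy := sufSet_self ht
            have hm' : p ++ (u.map wrLet ++ quLet q0 :: reLet r :: ext0) ∈ P.prot := by
              simpa [oqE, List.append_assoc, reLet] using hm
            obtain ⟨hblkmem, hblkiso⟩ := block_mem P hp hm'
            have h1 : ProtStep (M2 T) P.prot
                (wrS T q (nil2 T) (some q0), (y ++ z0).map .lt ++ [.rmark], u, p)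
                (quS T q q0, (y ++ z0).map .lt ++ [.rmark], u, p) := by
              have h0 := ProtStep.wr (M := M2 T) (P := P.prot) (a := none) (x := [])
                (v := (y ++ z0).map .lt ++ [.rmark]) (u := u) (p := p)
                (TrW.toqu q q0)
              simpa [wrS, quS] using h0
            have h2 : ProtStep (M2 T) P.prot
                (quS T q q0, (y ++ z0).map .lt ++ [.rmark], u, p)
                (wrS T qmid ⟨y, hy⟩ none, (y ++ z0).map .lt ++ [.rmark], [],
                  p ++ pblock u q0 r) :=
              ProtStep.qu (TrQ.qu ht q0 hy) hblkmem
            have h2' : ProtStep (M2 T) P.prot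
                (quS T q q0, (y ++ z0).map .lt ++ [.rmark], u, p)
                (wrS T qmid ⟨y, hy⟩ none, y.map .lt ++ (z0.map .lt ++ [.rmark]), [],
                  p ++ pblock u q0 r) := by
              simpa [List.map_append, List.append_assoc] using h2
            have h3 := read_run2 T (P := P.prot) qmid none y hy
              (z0.map .lt ++ [.rmark]) [] (p ++ pblock u q0 r)
            have h4 := ih' (p ++ pblock u q0 r) [] none hblkiso
              (by simpa [pblock, oqE, List.append_assoc] using hm')
            have := Relation.ReflTransGen.head h1
              (Relation.ReflTransGen.head h2' (h3.trans h4))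
            simpa [pblock, oqE, List.append_assoc, reLet] using this

def Mot2 (pf : List (PLet W Q R)) : PConfig σ W Q R (MS2 T) → Prop
  | (.inl (.inl _), v, u, p) => ∃ f ∈ T.accept, ∃ ext z, T.Path T.init ext z f ∧
      pf = p ++ u.map wrLet ++ ext ∧ v = .lmark :: (z.map .lt ++ [.rmark])
  | (.inl (.inr _), v, u, p) => v = [] ∧ u = [] ∧ p = pf
  | (.inr (.inl (t0, l, oq)), v, u, p) => ∃ f ∈ T.accept, ∃ ext z, T.Path t0 ext z f ∧
      pf = p ++ u.map wrLet ++ oqE oq ++ ext ∧ v = (l.val ++ z).map .lt ++ [.rmark]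
  | (.inr (.inr (t0, q)), v, u, p) => ∃ f ∈ T.accept, ∃ r ext z,
      T.Path t0 (reLet r :: ext) z f ∧ pf = p ++ pblock u q r ++ ext ∧
      v = z.map .lt ++ [.rmark]

lemma dir2_bwd {P : Set (List (PLet W Q R))} {pf : List (PLet W Q R)}
    {cfg : PConfig σ W Q R (MS2 T)}
    (hrun : Relation.ReflTransGen (ProtStep (M2 T) P) cfg (stAcc T, [], [], pf)) :
    Mot2 T pf cfg := by
  induction hrun using Relation.ReflTransGen.head_induction_on with
  | refl => exact ⟨rfl, rfl, rfl⟩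
  | head hstep htail ih =>
    cases hstep with
    | @wr s s' a x v u p ht =>
      have ht' : TrW T s a x s' := ht
      cases ht' with
      | start =>
        obtain ⟨f, hf, ext, z, hpath, hpf, hv⟩ := ih
        exact ⟨f, hf, ext, z, hpath, by simpa [oqE] using hpf, by simp [hv, nil2]⟩
      | eps h oq hy =>
        obtain ⟨f, hf, ext, z, hpath, hpf, hv⟩ := ih
        exact ⟨f, hf, ext, _ ++ z, by simpa using FST.Path.step h hpath,
          by simpa using hpf, by simpa [nil2] using hv⟩
      | @wr t w y t' h hy =>
        obtain ⟨f, hf, ext, z, hpath, hpf, hv⟩ := ih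
        refine ⟨f, hf, wrLet w :: ext, y ++ z, by simpa using FST.Path.step h hpath,
          ?_, by simpa [nil2] using hv⟩
        simp only [oqE, Option.elim] at hpf ⊢
        simp only [List.map_append, List.append_assoc] at hpf
        simpa [List.append_assoc] using hpf
      | @qu t q1 y t' h hy =>
        obtain ⟨f, hf, ext, z, hpath, hpf, hv⟩ := ih
        refine ⟨f, hf, quLet q1 :: ext, y ++ z, by simpa using FST.Path.step h hpath,
          ?_, by simpa [nil2] using hv⟩
        simp only [oqE, Option.elim] at hpf ⊢
        simpa [List.append_assoc] using hpf
      | toqu t q =>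
        obtain ⟨f, hf, r, ext, z, hpath, hpf, hv⟩ := ih
        refine ⟨f, hf, reLet r :: ext, z, hpath, ?_, by simpa [nil2] using hv⟩
        simp only [oqE, Option.elim]
        simpa [pblock, List.append_assoc] using hpf
      | @rd t c l l' hl oq =>
        obtain ⟨f, hf, ext, z, hpath, hpf, hv⟩ := ih
        exact ⟨f, hf, ext, z, hpath, by simpa using hpf, by simp [hl, hv]⟩
      | @fin t h =>
        obtain ⟨hv, hu, hp⟩ := ih
        have hu' : u = [] := by simpa using hu
        exact ⟨t, h, [], [], FST.Path.refl _, by simp [hp.symm, hu', oqE],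
          by simp [hv, nil2]⟩
    | @qu s s' q r v u p ht hm =>
      have ht' : TrQ T s q r s' := ht
      cases ht' with
      | @qu t r y t' h q hy =>
        obtain ⟨f, hf, ext, z, hpath, hpf, hv⟩ := ih
        exact ⟨f, hf, r, ext, y ++ z, by simpa using FST.Path.step h hpath,
          by simpa [List.append_assoc, oqE] using hpf, hv⟩

lemma dir2_lang (P : ProtLang W Q R) : (M2 T).Lang P.prot = T.Img P.prot := by
  ext w
  constructor
  · rintro ⟨p, hp, sf, hsf, hrun⟩
    have hsf' : sf = stAcc T := hsf
    subst hsf'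
    obtain ⟨f, hf, ext, z, hpath, hpf, hv⟩ := dir2_bwd T hrun
    have hz : z = w := by
      have hinj : Function.Injective (EndM.lt : σ → EndM σ) := fun a b h => by
        injection h
      have := hv
      simp only [tape, List.cons.injEq, true_and] at this
      have h2 : w.map EndM.lt = z.map EndM.lt := by
        have := List.append_inj_left' this ?len
        · exact this
        · simp
      exact (List.map_injective_iff.2 hinj h2).symm
    subst hz
    have hpf' : p = ext := by simpa using hpf
    subst hpf'
    exact ⟨p, hp, f, hf, hpath⟩
  · rintro ⟨p, hp, f, hf, hpath⟩
    have h1 : ProtStep (M2 T) P.prot (stInit T, tape w, [], [])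
        (wrS T T.init (nil2 T) none, w.map .lt ++ [.rmark], [], []) := by
      have h0 := ProtStep.wr (M := M2 T) (P := P.prot) (a := some .lmark) (x := [])
        (v := w.map .lt ++ [.rmark]) (u := []) (p := []) (TrW.start (T := T))
      simpa [tape, stInit, wrS] using h0
    have h2 := dir2_fwd T hpath hf [] [] none IsProtocol.nil (by simpa [oqE] using hp)
    refine ⟨p, hp, stAcc T, rfl, ?_⟩
    have := Relation.ReflTransGen.head h1 h2
    simpa [oqE, M2] using this

end Dir2


set_option linter.unusedSectionVars false in
/-- For every language of correct protocols `PROT` and finite input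
alphabet `σ`, a language `L ⊆ σ*` is accepted by some one-way nondeterministic
`PROT`-automaton with input alphabet `σ` iff `L = T(PROT)` for some finite-state
transducer `T` from the protocol alphabet to `σ`: the class of
`1NB_PROT`-recognizable languages is the principal rational cone generated by `PROT`. -/
theorem stmt0 {W Q R σ : Type} [Fintype W] [Fintype Q] [Fintype R]
    [Nonempty Q] [Nonempty R] [Fintype σ]
    (P : ProtLang W Q R) (L : Set (List σ)) :
    (∃ (n : ℕ) (M : ProtAut σ W Q R (Fin n)), L = M.Lang P.prot) ↔
      (∃ (m : ℕ) (T : FST (PLet W Q R) σ (Fin m)), L = T.Img P.prot) := by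
  constructor
  · rintro ⟨n, M, rfl⟩
    haveI : Finite ↥(sufSet M.transWr) := (sufSet_finite M.transWr_fin).to_subtype
    obtain ⟨m, ⟨e⟩⟩ := Finite.exists_equiv_fin (TS1 M)
    exact ⟨m, (T1 M).relabel e, by rw [FST.relabel_img, dir1_lang]⟩
  · rintro ⟨m, T, rfl⟩
    haveI : Finite ↥(sufSet T.trans) := (sufSet_finite T.trans_fin).to_subtype
    obtain ⟨n, ⟨e⟩⟩ := Finite.exists_equiv_fin (MS2 T)
    exact ⟨n, (M2 T).relabel e, by rw [ProtAut.relabel_lang, dir2_lang]⟩
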